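/- Let n be a positive integer. If X generates a Boolean algebra A and X is n-independent, then every n-preserving function from X into any Boolean algebra extends to a unique homomorphism on A; that is, A is n-free over X. -/

import Mathlib

open scoped Classical

variable {A : Type*}

/-- ω-independence: `⊥ ∉ X`, (⊥1), (⊥3). -/
def OmegaIndep [BooleanAlgebra A] (X : Set A) : Prop :=
  (⊥ : A) ∉ X ∧
  (∀ F : Finset A, F.Nonempty → ↑F ⊆ X → F.sup id ≠ ⊤) ∧
  (∀ F G : Finset A, F.Nonempty → G.Nonempty → ↑F ⊆ X → ↑G ⊆ X →
      F.inf id ≠ ⊥ → F.inf id ≤ G.sup id → (F ∩ G).Nonempty)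

/-- n-independence: `⊥ ∉ X`, (⊥1), (⊥2)_n, (⊥3); `n = ⊤` codes ω. -/
def NIndep [BooleanAlgebra A] (n : ℕ∞) (X : Set A) : Prop :=
  (⊥ : A) ∉ X ∧
  (∀ F : Finset A, F.Nonempty → ↑F ⊆ X → F.sup id ≠ ⊤) ∧
  (∀ F : Finset A, F.Nonempty → ↑F ⊆ X → F.inf id = ⊥ →
      ∃ F' ⊆ F, (F'.card : ℕ∞) ≤ n ∧ F'.inf id = ⊥) ∧
  (∀ F G : Finset A, F.Nonempty → G.Nonempty → ↑F ⊆ X → ↑G ⊆ X →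
      F.inf id ≠ ⊥ → F.inf id ≤ G.sup id → (F ∩ G).Nonempty)

/-- Elementary product `∏_{x ∈ R} x^{ε x}`. -/
def elemProd [BooleanAlgebra A] (R : Finset A) (ε : A → Bool) : A :=
  R.inf (fun x => if ε x then x else xᶜ)

/-- `f` is n-preserving on `X` (`n = ⊤` codes ω-preserving). -/
def NPreserving [BooleanAlgebra A] {B : Type*} [BooleanAlgebra B]
    (n : ℕ∞) (X : Set A) (f : A → B) : Prop :=
  ∀ F : Finset A, ↑F ⊆ X → (F.card : ℕ∞) ≤ n → F.inf id = ⊥ → F.inf f = ⊥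

/-- Membership in the subalgebra generated by `X`. -/
inductive Gen [BooleanAlgebra A] (X : Set A) : A → Prop
  | of {x : A} : x ∈ X → Gen X x
  | bot : Gen X ⊥
  | top : Gen X ⊤
  | inf {x y : A} : Gen X x → Gen X y → Gen X (x ⊓ y)
  | sup {x y : A} : Gen X x → Gen X y → Gen X (x ⊔ y)
  | compl {x : A} : Gen X x → Gen X xᶜ

/-- `X` generates the Boolean algebra `A`. -/
def Generates [BooleanAlgebra A] (X : Set A) : Prop := ∀ a : A, Gen X a

section NF
variable {C : Type*} {D : Type*} [BooleanAlgebra C]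

/-- Elementary element determined by a pair of finsets. -/
def nfE (h : D → C) (t : Finset D × Finset D) : C :=
  t.1.inf h ⊓ (t.2.sup h)ᶜ

/-- `p` has a disjunctive normal form over `X` via `h`. -/
def HasNF (h : D → C) (X : Set D) (p : C) : Prop :=
  ∃ T : Finset (Finset D × Finset D),
    (∀ t ∈ T, ↑t.1 ⊆ X ∧ ↑t.2 ⊆ X) ∧ p = T.sup (nfE h)

variable {h : D → C} {X : Set D}

lemma compl_finset_inf (s : Finset D) : (s.inf h)ᶜ = s.sup (fun x => (h x)ᶜ) := by
  induction s using Finset.cons_induction with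
  | empty => simp
  | cons a s ha ih => simp [Finset.inf_cons, Finset.sup_cons, compl_inf, ih]

lemma compl_finset_sup (s : Finset D) : (s.sup h)ᶜ = s.inf (fun x => (h x)ᶜ) := by
  induction s using Finset.cons_induction with
  | empty => simp
  | cons a s ha ih => simp [Finset.inf_cons, Finset.sup_cons, compl_sup, ih]

lemma hasNF_of {x : D} (hx : x ∈ X) : HasNF h X (h x) :=
  ⟨{({x}, ∅)}, by simp [hx], by simp [nfE]⟩

lemma hasNF_bot : HasNF h X ⊥ := ⟨∅, by simp, by simp⟩

lemma hasNF_top : HasNF h X ⊤ := ⟨{(∅, ∅)}, by simp, by simp [nfE]⟩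

lemma hasNF_sup {p q : C} (hp : HasNF h X p) (hq : HasNF h X q) : HasNF h X (p ⊔ q) := by
  obtain ⟨T₁, hT₁, rfl⟩ := hp
  obtain ⟨T₂, hT₂, rfl⟩ := hq
  exact ⟨T₁ ∪ T₂, fun t ht => (Finset.mem_union.1 ht).elim (hT₁ t) (hT₂ t),
    (Finset.sup_union).symm⟩

lemma nfE_inf_nfE (t₁ t₂ : Finset D × Finset D) :
    nfE h t₁ ⊓ nfE h t₂ = nfE h (t₁.1 ∪ t₂.1, t₁.2 ∪ t₂.2) := by
  simp only [nfE, Finset.inf_union, Finset.sup_union, compl_sup]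
  rw [inf_inf_inf_comm]

lemma hasNF_inf {p q : C} (hp : HasNF h X p) (hq : HasNF h X q) : HasNF h X (p ⊓ q) := by
  obtain ⟨T₁, hT₁, rfl⟩ := hp
  obtain ⟨T₂, hT₂, rfl⟩ := hq
  refine ⟨(T₁ ×ˢ T₂).image (fun t => (t.1.1 ∪ t.2.1, t.1.2 ∪ t.2.2)), ?_, ?_⟩
  · intro t ht
    obtain ⟨u, hu, rfl⟩ := Finset.mem_image.1 ht
    obtain ⟨hu1, hu2⟩ := Finset.mem_product.1 hu
    constructor <;> rw [Finset.coe_union]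
    · exact Set.union_subset (hT₁ _ hu1).1 (hT₂ _ hu2).1
    · exact Set.union_subset (hT₁ _ hu1).2 (hT₂ _ hu2).2
  · rw [Finset.sup_image, Finset.sup_inf_sup]
    exact Finset.sup_congr rfl (fun u _ => nfE_inf_nfE u.1 u.2)

lemma hasNF_finsetInf {ι : Type*} {s : Finset ι} {q : ι → C}
    (hq : ∀ i ∈ s, HasNF h X (q i)) : HasNF h X (s.inf q) := by
  induction s using Finset.cons_induction with
  | empty => simpa using hasNF_top
  | cons a s ha ih =>
    rw [Finset.inf_cons]
    exact hasNF_inf (hq a (Finset.mem_cons_self a s))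
      (ih fun i hi => hq i (Finset.mem_cons_of_mem hi))

lemma hasNF_finsetSup {ι : Type*} {s : Finset ι} {q : ι → C}
    (hq : ∀ i ∈ s, HasNF h X (q i)) : HasNF h X (s.sup q) := by
  induction s using Finset.cons_induction with
  | empty => simpa using hasNF_bot
  | cons a s ha ih =>
    rw [Finset.sup_cons]
    exact hasNF_sup (hq a (Finset.mem_cons_self a s))
      (ih fun i hi => hq i (Finset.mem_cons_of_mem hi))

lemma hasNF_compl {p : C} (hp : HasNF h X p) : HasNF h X pᶜ := by
  obtain ⟨T, hT, rfl⟩ := hp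
  rw [compl_finset_sup]
  refine hasNF_finsetInf (fun t ht => ?_)
  have he : (nfE h t)ᶜ = t.1.sup (fun x => (h x)ᶜ) ⊔ t.2.sup h := by
    rw [nfE, compl_inf, compl_compl, compl_finset_inf]
  rw [he]
  refine hasNF_sup (hasNF_finsetSup fun x hx => ?_) (hasNF_finsetSup fun x hx => ?_)
  · exact ⟨{(∅, {x})}, by simpa using (hT t ht).1 hx, by simp [nfE]⟩
  · exact hasNF_of ((hT t ht).2 hx)

lemma gen_hasNF {p : C} (hp : Gen (h '' X) p) : HasNF h X p := by
  induction hp with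
  | of hx => obtain ⟨y, hy, rfl⟩ := hx; exact hasNF_of hy
  | bot => exact hasNF_bot
  | top => exact hasNF_top
  | inf _ _ ih₁ ih₂ => exact hasNF_inf ih₁ ih₂
  | sup _ _ ih₁ ih₂ => exact hasNF_sup ih₁ ih₂
  | compl _ ih => exact hasNF_compl ih

end NF

section ProdHelpers
variable {A : Type*} {B : Type*} {D : Type*} [BooleanAlgebra A] [BooleanAlgebra B]

lemma fst_finset_sup (e : D → A × B) (s : Finset D) :
    (s.sup e).1 = s.sup (fun t => (e t).1) := by
  induction s using Finset.cons_induction with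
  | empty => rfl
  | cons a s ha ih => simp only [Finset.sup_cons]; exact congrArg (_ ⊔ ·) ih

lemma snd_finset_sup (e : D → A × B) (s : Finset D) :
    (s.sup e).2 = s.sup (fun t => (e t).2) := by
  induction s using Finset.cons_induction with
  | empty => rfl
  | cons a s ha ih => simp only [Finset.sup_cons]; exact congrArg (_ ⊔ ·) ih

lemma fst_finset_inf (e : D → A × B) (s : Finset D) :
    (s.inf e).1 = s.inf (fun t => (e t).1) := by
  induction s using Finset.cons_induction with
  | empty => rfl
  | cons a s ha ih => simp only [Finset.inf_cons]; exact congrArg (_ ⊓ ·) ih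

lemma snd_finset_inf (e : D → A × B) (s : Finset D) :
    (s.inf e).2 = s.inf (fun t => (e t).2) := by
  induction s using Finset.cons_induction with
  | empty => rfl
  | cons a s ha ih => simp only [Finset.inf_cons]; exact congrArg (_ ⊓ ·) ih

end ProdHelpers

/-- Any bounded lattice hom between Boolean algebras preserves complements. -/
lemma blh_map_compl {A : Type*} {B : Type*} [BooleanAlgebra A] [BooleanAlgebra B]
    (g : BoundedLatticeHom A B) (x : A) : g xᶜ = (g x)ᶜ := by
  have hc : IsCompl (g x) (g xᶜ) := by
    constructor
    · rw [disjoint_iff, ← map_inf, inf_compl_eq_bot, map_bot]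
    · rw [codisjoint_iff, ← map_sup, sup_compl_eq_top, map_top]
  exact (hc.compl_eq).symm

section Key
variable {A : Type u_1} {B : Type u_2} [BooleanAlgebra A] [BooleanAlgebra B]

/-- The key combinatorial lemma: vanishing elementary products are preserved by `f`. -/
lemma key_lemma {n : ℕ∞} {X : Set A} (hind : NIndep n X) {f : A → B}
    (hf : NPreserving n X f) {F G : Finset A} (hF : ↑F ⊆ X) (hG : ↑G ⊆ X)
    (h0 : F.inf id ⊓ (G.sup id)ᶜ = ⊥) : F.inf f ⊓ (G.sup f)ᶜ = ⊥ := by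
  by_cases hFb : F.inf id = ⊥
  · rcases F.eq_empty_or_nonempty with rfl | hFne
    · -- then ⊤ = ⊥ in A, so by 0-preservation ⊤ = ⊥ in B
      have hb : (∅ : Finset A).inf f = ⊥ := hf ∅ (by simp) (by simp) (by simpa using hFb)
      simp only [Finset.inf_empty] at hb
      exact le_bot_iff.1 (hb ▸ le_top)
    · obtain ⟨F', hF'sub, hF'card, hF'bot⟩ := hind.2.2.1 F hFne hF hFb
      have : F'.inf f = ⊥ := hf F' ((Finset.coe_subset.2 hF'sub).trans hF) hF'card hF'bot
      exact le_bot_iff.1 ((inf_le_left.trans (Finset.inf_mono hF'sub)).trans this.le)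
  · have hle : F.inf id ≤ G.sup id := by
      rwa [← sdiff_eq, sdiff_eq_bot_iff] at h0
    rcases G.eq_empty_or_nonempty with rfl | hGne
    · exact absurd (le_bot_iff.1 (by simpa using hle)) hFb
    rcases F.eq_empty_or_nonempty with rfl | hFne
    · exact absurd (top_le_iff.1 (by simpa using hle)) (hind.2.1 G hGne hG)
    obtain ⟨x, hx⟩ := hind.2.2.2 F G hFne hGne hF hG hFb hle
    rw [Finset.mem_inter] at hx
    have h1 : F.inf f ≤ f x := Finset.inf_le hx.1
    have h2 : (G.sup f)ᶜ ≤ (f x)ᶜ := compl_le_compl (Finset.le_sup hx.2)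
    exact le_bot_iff.1 ((inf_le_inf h1 h2).trans (by rw [inf_compl_eq_bot]))

end Key

/-- if `X` generates `A` and is n-independent (n a positive integer),
then every n-preserving map from `X` into any Boolean algebra extends to a unique
homomorphism; i.e. `A` is n-free over `X`. -/
theorem stmt_8.{u, v} {A : Type u} [BooleanAlgebra A] (n : ℕ) (hn : 0 < n) (X : Set A)
    (hgen : Generates X) (hind : NIndep (n : ℕ∞) X)
    {B : Type v} [BooleanAlgebra B] (f : A → B) (hf : NPreserving (n : ℕ∞) X f) :
    ∃! g : BoundedLatticeHom A B, ∀ x ∈ X, g x = f x := by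
  classical
  set h : A → A × B := fun x => (x, f x) with hh
  -- the crucial "vertical" lemma
  have key : ∀ p : A × B, Gen (h '' X) p → p.1 = ⊥ → p.2 = ⊥ := by
    intro p hp hp1
    obtain ⟨T, hT, rfl⟩ := gen_hasNF hp
    rw [fst_finset_sup] at hp1
    rw [snd_finset_sup]
    rw [Finset.sup_eq_bot_iff] at hp1 ⊢
    intro t ht
    have h1 : t.1.inf id ⊓ (t.2.sup id)ᶜ = ⊥ := by
      have := hp1 t ht
      rw [nfE] at this
      rwa [show ((t.1.inf h ⊓ (t.2.sup h)ᶜ).1 : A) = (t.1.inf h).1 ⊓ ((t.2.sup h).1)ᶜ from rfl,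
        fst_finset_inf, fst_finset_sup] at this
    have h2 := key_lemma hind hf (hT t ht).1 (hT t ht).2 h1
    rw [nfE, show ((t.1.inf h ⊓ (t.2.sup h)ᶜ).2 : B) = (t.1.inf h).2 ⊓ ((t.2.sup h).2)ᶜ from rfl,
      snd_finset_inf, snd_finset_sup]
    exact h2
  -- existence of a companion value
  have exb : ∀ a : A, ∃ b : B, Gen (h '' X) (a, b) := by
    intro a
    induction hgen a with
    | @of x hx => exact ⟨f x, Gen.of ⟨x, hx, rfl⟩⟩
    | bot => exact ⟨⊥, Gen.bot⟩
    | top => exact ⟨⊤, Gen.top⟩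
    | @inf x y _ _ ih₁ ih₂ =>
      obtain ⟨b₁, hb₁⟩ := ih₁; obtain ⟨b₂, hb₂⟩ := ih₂
      exact ⟨b₁ ⊓ b₂, Gen.inf hb₁ hb₂⟩
    | @sup x y _ _ ih₁ ih₂ =>
      obtain ⟨b₁, hb₁⟩ := ih₁; obtain ⟨b₂, hb₂⟩ := ih₂
      exact ⟨b₁ ⊔ b₂, Gen.sup hb₁ hb₂⟩
    | @compl x _ ih =>
      obtain ⟨b, hb⟩ := ih
      exact ⟨bᶜ, Gen.compl hb⟩
  -- uniqueness of the companion value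
  have uniqb : ∀ (a : A) (b b' : B), Gen (h '' X) (a, b) → Gen (h '' X) (a, b') → b = b' := by
    intro a b b' hb hb'
    have hsd : Gen (h '' X) (((a, b) ⊓ (a, b')ᶜ) ⊔ ((a, b') ⊓ (a, b)ᶜ)) :=
      Gen.sup (Gen.inf hb (Gen.compl hb')) (Gen.inf hb' (Gen.compl hb))
    have h1 : (((a, b) ⊓ (a, b')ᶜ) ⊔ ((a, b') ⊓ (a, b)ᶜ) : A × B).1 = ⊥ := by
      show (a ⊓ aᶜ) ⊔ (a ⊓ aᶜ) = ⊥
      simp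
    have h2 := key _ hsd h1
    have h2' : (b ⊓ b'ᶜ) ⊔ (b' ⊓ bᶜ) = ⊥ := h2
    have hsymm : symmDiff b b' = ⊥ := by
      rwa [symmDiff_eq]
    exact symmDiff_eq_bot.1 hsymm
  -- define the extension
  choose g hg using exb
  have guniq : ∀ (a : A) (b : B), Gen (h '' X) (a, b) → g a = b := fun a b hb =>
    uniqb a (g a) b (hg a) hb
  have hbot : g ⊥ = ⊥ := guniq ⊥ ⊥ (by exact Gen.bot)
  have htop : g ⊤ = ⊤ := guniq ⊤ ⊤ (by exact Gen.top)
  have hinf : ∀ x y, g (x ⊓ y) = g x ⊓ g y := fun x y =>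
    guniq (x ⊓ y) (g x ⊓ g y) (Gen.inf (hg x) (hg y))
  have hsup : ∀ x y, g (x ⊔ y) = g x ⊔ g y := fun x y =>
    guniq (x ⊔ y) (g x ⊔ g y) (Gen.sup (hg x) (hg y))
  have hX : ∀ x ∈ X, g x = f x := fun x hx => guniq x (f x) (Gen.of ⟨x, hx, rfl⟩)
  refine ⟨{ toFun := g, map_sup' := hsup, map_inf' := hinf,
            map_top' := htop, map_bot' := hbot }, hX, ?_⟩
  intro y hy
  ext a
  show y a = g a
  induction hgen a with
  | @of x hx => rw [hy x hx, hX x hx]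
  | bot => rw [map_bot, hbot]
  | top => rw [map_top, htop]
  | @inf x z _ _ ih₁ ih₂ => rw [map_inf, hinf, ih₁, ih₂]
  | @sup x z _ _ ih₁ ih₂ => rw [map_sup, hsup, ih₁, ih₂]
  | @compl x _ ih =>
    have hc : g xᶜ = (g x)ᶜ :=
      guniq xᶜ (g x)ᶜ (by exact Gen.compl (hg x))
    rw [blh_map_compl y x, ih, hc]
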